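/- Let q₁, q₂, q₃, q₄ : ℝ² → ℝ² be the four affine transformations of the Hilbert construction: q₁(x,y) = (y/2, x/2), q₂(x,y) = (x/2, (y+1)/2), q₃(x,y) = ((x+1)/2, (y+1)/2), q₄(x,y) = ((2−y)/2, (1−x)/2). Then the unit square Q = [0,1] × [0,1] is the unique nonempty compact subset K of ℝ² satisfying K = q₁(K) ∪ q₂(K) ∪ q₃(K) ∪ q₄(K). -/

import Mathlib

open scoped NNReal ENNReal


/-- The unit square `[0,1] × [0,1]` in the plane `ℝ²`. -/
def unitSquare : Set (ℝ × ℝ) := Set.Icc (0 : ℝ) 1 ×ˢ Set.Icc (0 : ℝ) 1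

/-- First affine map of the Hilbert construction: `q₁(x,y) = (y/2, x/2)`. -/
noncomputable def q1 : ℝ × ℝ → ℝ × ℝ := fun p => (p.2 / 2, p.1 / 2)

/-- Second affine map of the Hilbert construction: `q₂(x,y) = (x/2, (y+1)/2)`. -/
noncomputable def q2 : ℝ × ℝ → ℝ × ℝ := fun p => (p.1 / 2, (p.2 + 1) / 2)

/-- Third affine map of the Hilbert construction: `q₃(x,y) = ((x+1)/2, (y+1)/2)`. -/
noncomputable def q3 : ℝ × ℝ → ℝ × ℝ := fun p => ((p.1 + 1) / 2, (p.2 + 1) / 2)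

/-- Fourth affine map of the Hilbert construction: `q₄(x,y) = ((2−y)/2, (1−x)/2)`. -/
noncomputable def q4 : ℝ × ℝ → ℝ × ℝ := fun p => ((2 - p.2) / 2, (1 - p.1) / 2)

private lemma dist_half' (x y a b : ℝ) (h : a - b = (x - y) / 2 ∨ a - b = (y - x) / 2) :
    dist a b = dist x y / 2 := by
  rw [Real.dist_eq, Real.dist_eq]
  rcases h with h | h
  · rw [show a - b = (x - y) / 2 from h, abs_div]; norm_num
  · rw [show a - b = (y - x) / 2 from h, abs_div, abs_sub_comm y x]; norm_num

private lemma lip_of_halves {f : ℝ × ℝ → ℝ × ℝ}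
    (h : ∀ p q : ℝ × ℝ, dist (f p).1 (f q).1 = dist p.1 q.1 / 2 ∨
        dist (f p).1 (f q).1 = dist p.2 q.2 / 2)
    (h' : ∀ p q : ℝ × ℝ, dist (f p).2 (f q).2 = dist p.1 q.1 / 2 ∨
        dist (f p).2 (f q).2 = dist p.2 q.2 / 2) :
    LipschitzWith 2⁻¹ f := by
  apply LipschitzWith.of_dist_le_mul
  intro p q
  rw [Prod.dist_eq]
  have hb1 : dist p.1 q.1 ≤ dist p q := by rw [Prod.dist_eq]; exact le_max_left _ _
  have hb2 : dist p.2 q.2 ≤ dist p q := by rw [Prod.dist_eq]; exact le_max_right _ _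
  have hc : ((2⁻¹ : ℝ≥0) : ℝ) = 2⁻¹ := by norm_num
  rw [hc]
  apply max_le
  · rcases h p q with h1 | h1 <;> rw [h1] <;> linarith
  · rcases h' p q with h1 | h1 <;> rw [h1] <;> linarith

private lemma lip_q1 : LipschitzWith 2⁻¹ q1 := by
  apply lip_of_halves <;> intro p q <;> simp only [q1]
  · exact Or.inr (dist_half' _ _ _ _ (Or.inl (by ring)))
  · exact Or.inl (dist_half' _ _ _ _ (Or.inl (by ring)))

private lemma lip_q2 : LipschitzWith 2⁻¹ q2 := by
  apply lip_of_halves <;> intro p q <;> simp only [q2]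
  · exact Or.inl (dist_half' _ _ _ _ (Or.inl (by ring)))
  · exact Or.inr (dist_half' _ _ _ _ (Or.inl (by ring)))

private lemma lip_q3 : LipschitzWith 2⁻¹ q3 := by
  apply lip_of_halves <;> intro p q <;> simp only [q3]
  · exact Or.inl (dist_half' _ _ _ _ (Or.inl (by ring)))
  · exact Or.inr (dist_half' _ _ _ _ (Or.inl (by ring)))

private lemma lip_q4 : LipschitzWith 2⁻¹ q4 := by
  apply lip_of_halves <;> intro p q <;> simp only [q4]
  · exact Or.inr (dist_half' _ _ _ _ (Or.inr (by ring)))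
  · exact Or.inl (dist_half' _ _ _ _ (Or.inr (by ring)))

open EMetric in
private lemma infEdist_image_le {f : ℝ × ℝ → ℝ × ℝ} (hf : LipschitzWith 2⁻¹ f)
    (x : ℝ × ℝ) (t : Set (ℝ × ℝ)) :
    infEdist (f x) (f '' t) ≤ 2⁻¹ * infEdist x t := by
  have hne : ((2⁻¹ : ℝ≥0) : ℝ≥0∞) = (2⁻¹ : ℝ≥0∞) := by
    simp [ENNReal.coe_inv]
  have hrw : (2⁻¹ : ℝ≥0∞) * infEdist x t = ⨅ y ∈ t, 2⁻¹ * edist x y := by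
    rw [infEdist, Metric.infEDist, ENNReal.mul_iInf_of_ne (by norm_num) (by norm_num)]
    refine iInf_congr fun y => ?_
    rw [ENNReal.mul_iInf_of_ne (by norm_num) (by norm_num)]
  rw [hrw]
  refine le_iInf₂ fun y hy => ?_
  calc infEdist (f x) (f '' t) ≤ edist (f x) (f y) :=
        infEdist_le_edist_of_mem (Set.mem_image_of_mem f hy)
    _ ≤ (2⁻¹ : ℝ≥0) * edist x y := hf.edist_le_mul x y
    _ = 2⁻¹ * edist x y := by rw [hne]

open EMetric in
private lemma hausdorffEdist_image_le {f : ℝ × ℝ → ℝ × ℝ} (hf : LipschitzWith 2⁻¹ f)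
    (s t : Set (ℝ × ℝ)) :
    hausdorffEdist (f '' s) (f '' t) ≤ 2⁻¹ * hausdorffEdist s t := by
  refine hausdorffEdist_le_of_infEdist ?_ ?_
  · rintro _ ⟨x, hx, rfl⟩
    exact (infEdist_image_le hf x t).trans
      (mul_le_mul_right (infEdist_le_hausdorffEdist_of_mem hx) _)
  · rintro _ ⟨x, hx, rfl⟩
    calc infEdist (f x) (f '' s) ≤ 2⁻¹ * infEdist x s := infEdist_image_le hf x s
      _ ≤ 2⁻¹ * hausdorffEdist t s :=
        mul_le_mul_right (infEdist_le_hausdorffEdist_of_mem hx) _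
      _ = 2⁻¹ * hausdorffEdist s t := by rw [hausdorffEdist, Metric.hausdorffEDist_comm]

open EMetric in
private lemma hausdorffEdist_union_le (s₁ s₂ t₁ t₂ : Set (ℝ × ℝ)) :
    hausdorffEdist (s₁ ∪ s₂) (t₁ ∪ t₂) ≤
      max (hausdorffEdist s₁ t₁) (hausdorffEdist s₂ t₂) := by
  refine hausdorffEdist_le_of_infEdist ?_ ?_
  · rintro x (hx | hx)
    · exact ((infEdist_anti Set.subset_union_left).trans
        (infEdist_le_hausdorffEdist_of_mem hx)).trans (le_max_left _ _)
    · exact ((infEdist_anti Set.subset_union_right).trans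
        (infEdist_le_hausdorffEdist_of_mem hx)).trans (le_max_right _ _)
  · rintro x (hx | hx)
    · refine ((infEdist_anti Set.subset_union_left).trans ?_).trans (le_max_left _ _)
      rw [hausdorffEdist, Metric.hausdorffEDist_comm]
      exact infEdist_le_hausdorffEdist_of_mem hx
    · refine ((infEdist_anti Set.subset_union_right).trans ?_).trans (le_max_right _ _)
      rw [hausdorffEdist, Metric.hausdorffEDist_comm]
      exact infEdist_le_hausdorffEdist_of_mem hx

private lemma unitSquare_eq :
    unitSquare = q1 '' unitSquare ∪ q2 '' unitSquare ∪ q3 '' unitSquare ∪ q4 '' unitSquare := by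
  ext ⟨x, y⟩
  simp only [unitSquare, Set.mem_union, Set.mem_image, Set.mem_prod, Set.mem_Icc,
    q1, q2, q3, q4, Prod.exists, Prod.mk.injEq]
  constructor
  · rintro ⟨⟨hx0, hx1⟩, hy0, hy1⟩
    rcases le_total x 2⁻¹ with hx | hx <;> rcases le_total y 2⁻¹ with hy | hy
    · exact Or.inl (Or.inl (Or.inl ⟨2 * y, 2 * x, ⟨⟨by linarith, by linarith⟩,
        by linarith, by linarith⟩, by ring, by ring⟩))
    · exact Or.inl (Or.inl (Or.inr ⟨2 * x, 2 * y - 1, ⟨⟨by linarith, by linarith⟩,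
        by linarith, by linarith⟩, by ring, by ring⟩))
    · exact Or.inr ⟨1 - 2 * y, 2 - 2 * x, ⟨⟨by linarith, by linarith⟩,
        by linarith, by linarith⟩, by ring, by ring⟩
    · exact Or.inl (Or.inr ⟨2 * x - 1, 2 * y - 1, ⟨⟨by linarith, by linarith⟩,
        by linarith, by linarith⟩, by ring, by ring⟩)
  · rintro (((⟨a, b, ⟨⟨ha0, ha1⟩, hb0, hb1⟩, rfl, rfl⟩ | ⟨a, b, ⟨⟨ha0, ha1⟩, hb0, hb1⟩, rfl, rfl⟩) |
      ⟨a, b, ⟨⟨ha0, ha1⟩, hb0, hb1⟩, rfl, rfl⟩) | ⟨a, b, ⟨⟨ha0, ha1⟩, hb0, hb1⟩, rfl, rfl⟩) <;>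
      constructor <;> constructor <;> linarith

/-- The unit square is the unique nonempty compact subset `K` of the plane with
`K = q₁(K) ∪ q₂(K) ∪ q₃(K) ∪ q₄(K)`. -/
theorem unitSquare_unique_attractor :
    (unitSquare.Nonempty ∧ IsCompact unitSquare ∧
      unitSquare = q1 '' unitSquare ∪ q2 '' unitSquare ∪ q3 '' unitSquare ∪ q4 '' unitSquare) ∧
    ∀ K : Set (ℝ × ℝ), K.Nonempty → IsCompact K →
      K = q1 '' K ∪ q2 '' K ∪ q3 '' K ∪ q4 '' K → K = unitSquare := by
  have hQne : unitSquare.Nonempty := ⟨(0, 0), by simp [unitSquare]⟩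
  have hQc : IsCompact unitSquare := isCompact_Icc.prod isCompact_Icc
  refine ⟨⟨hQne, hQc, unitSquare_eq⟩, fun K hKne hKc hK => ?_⟩
  set d := EMetric.hausdorffEdist K unitSquare with hd
  have hdt : d ≠ ⊤ :=
    Metric.hausdorffEdist_ne_top_of_nonempty_of_bounded hKne hQne
      hKc.isBounded hQc.isBounded
  have hdle : d ≤ 2⁻¹ * d := by
    calc d = EMetric.hausdorffEdist
          (q1 '' K ∪ q2 '' K ∪ q3 '' K ∪ q4 '' K)
          (q1 '' unitSquare ∪ q2 '' unitSquare ∪ q3 '' unitSquare ∪ q4 '' unitSquare) := by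
            rw [hd, ← hK, ← unitSquare_eq]
      _ ≤ max (max (max (EMetric.hausdorffEdist (q1 '' K) (q1 '' unitSquare))
            (EMetric.hausdorffEdist (q2 '' K) (q2 '' unitSquare)))
            (EMetric.hausdorffEdist (q3 '' K) (q3 '' unitSquare)))
            (EMetric.hausdorffEdist (q4 '' K) (q4 '' unitSquare)) := by
          refine (hausdorffEdist_union_le _ _ _ _).trans (max_le_max ?_ le_rfl)
          exact (hausdorffEdist_union_le _ _ _ _).trans
            (max_le_max (hausdorffEdist_union_le _ _ _ _) le_rfl)
      _ ≤ 2⁻¹ * d := by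
          refine max_le (max_le (max_le ?_ ?_) ?_) ?_
          · exact hausdorffEdist_image_le lip_q1 _ _
          · exact hausdorffEdist_image_le lip_q2 _ _
          · exact hausdorffEdist_image_le lip_q3 _ _
          · exact hausdorffEdist_image_le lip_q4 _ _
  have hd0 : d = 0 := by
    by_contra h0
    have : d / 2 < d := ENNReal.half_lt_self h0 hdt
    rw [ENNReal.div_eq_inv_mul] at this
    exact absurd (lt_of_le_of_lt hdle this) (lt_irrefl d)
  exact (EMetric.hausdorffEdist_zero_iff_eq_of_closed hKc.isClosed
    (hQc.isClosed)).1 hd0
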